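/- arXiv:1410.3439 — 2 statements merged into one kernel-verified Lean document; each statement's English description precedes it below -/
import Mathlib

section
/- Let τ = τ₁ be conjugation by [[0,1],[1,0]] on SL₂(ℝ). Then the extended symmetric space equals the symmetric space: {g ∈ SL₂(ℝ) : τ(g) = g⁻¹} = {g τ(g)⁻¹ : g ∈ SL₂(ℝ)}. -/
open Matrix

noncomputable def tau {k : Type*} [Field k] (m : k) (g : Matrix (Fin 2) (Fin 2) k) :
    Matrix (Fin 2) (Fin 2) k := !![0,1;m,0] * g * (!![0,1;m,0])⁻¹

lemma M_inv : (!![0,1;1,0] : Matrix (Fin 2) (Fin 2) ℝ)⁻¹ = !![0,1;1,0] := by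
  apply Matrix.inv_eq_right_inv
  ext i j
  fin_cases i <;> fin_cases j <;> simp [Matrix.mul_apply, Fin.sum_univ_two]

lemma tau_eq (g : Matrix (Fin 2) (Fin 2) ℝ) :
    tau 1 g = !![g 1 1, g 1 0; g 0 1, g 0 0] := by
  rw [tau, M_inv]
  ext i j
  fin_cases i <;> fin_cases j <;>
    simp [Matrix.mul_apply, Matrix.vecMul, dotProduct, Fin.sum_univ_two]

lemma inv2 (g : Matrix (Fin 2) (Fin 2) ℝ) (h : g.det = 1) :
    g⁻¹ = !![g 1 1, -(g 0 1); -(g 1 0), g 0 0] := by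
  apply Matrix.inv_eq_right_inv
  rw [Matrix.det_fin_two] at h
  ext i j
  fin_cases i <;> fin_cases j <;>
    simp [Matrix.mul_apply, Fin.sum_univ_two] <;> ring_nf <;> nlinarith [h]

lemma key (a b d : ℝ) (h : a * d + b * b = 1) :
    ∃ p q r s : ℝ, p * s - q * r = 1 ∧ p * p - q * q = a ∧ q * s - p * r = b ∧
      s * s - r * r = d := by
  rcases lt_trichotomy a 0 with ha | ha | ha
  · set t := Real.sqrt (-a) with htdef
    have ht : t * t = -a := Real.mul_self_sqrt (by linarith)
    have ht0 : t ≠ 0 := by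
      intro h0; rw [h0] at ht; nlinarith
    refine ⟨0, t, -(1 / t), b / t, ?_, ?_, ?_, ?_⟩
    · field_simp
      ring
    · nlinarith
    · field_simp
      ring
    · field_simp
      nlinarith
  · subst ha
    have hb : b = 1 ∨ b = -1 := by
      have : b * b = 1 := by linarith [h]
      rcases mul_self_eq_one_iff.mp this with h1 | h1
      · exact Or.inl h1
      · exact Or.inr h1
    rcases hb with hb | hb
    · exact ⟨1, 1, (d - 1) / 2, (d + 1) / 2, by ring, by linarith, by rw [hb]; ring,
        by ring⟩
    · exact ⟨1, -1, (1 - d) / 2, (1 + d) / 2, by ring, by linarith, by rw [hb]; ring,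
        by ring⟩
  · set t := Real.sqrt a with htdef
    have ht : t * t = a := Real.mul_self_sqrt (by linarith)
    have ht0 : t ≠ 0 := by
      intro h0; rw [h0] at ht; nlinarith
    refine ⟨t, 0, -(b / t), 1 / t, ?_, ?_, ?_, ?_⟩
    · field_simp
      ring
    · nlinarith
    · field_simp
      ring
    · field_simp
      nlinarith

/-- For τ = τ₁ on SL₂(ℝ), the extended symmetric space equals the symmetric space. -/
theorem stmt8 :
    {g : Matrix (Fin 2) (Fin 2) ℝ | g.det = 1 ∧ tau 1 g = g⁻¹} =
      {q : Matrix (Fin 2) (Fin 2) ℝ |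
        ∃ g : Matrix (Fin 2) (Fin 2) ℝ, g.det = 1 ∧ q = g * (tau 1 g)⁻¹} := by
  ext q
  simp only [Set.mem_setOf_eq]
  constructor
  · rintro ⟨hdet, htau⟩
    rw [tau_eq, inv2 q hdet] at htau
    have hc : q 1 0 = -(q 0 1) := by
      have := congrFun (congrFun htau 0) 1
      simpa using this
    have hdet' : q 0 0 * q 1 1 + q 0 1 * q 0 1 = 1 := by
      rw [Matrix.det_fin_two] at hdet
      rw [hc] at hdet
      linarith
    obtain ⟨p, w, r, s, h1, h2, h3, h4⟩ := key (q 0 0) (q 0 1) (q 1 1) hdet'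
    refine ⟨!![p, w; r, s], by rw [Matrix.det_fin_two_of]; linarith, ?_⟩
    have htauh : tau 1 !![p, w; r, s] = !![s, r; w, p] := by
      rw [tau_eq]; norm_num
    have hdet2 : (!![s, r; w, p] : Matrix (Fin 2) (Fin 2) ℝ).det = 1 := by
      rw [Matrix.det_fin_two_of]; linear_combination h1
    rw [htauh, inv2 _ hdet2]
    ext i j
    fin_cases i <;> fin_cases j <;>
      simp [Matrix.mul_apply, Fin.sum_univ_two] <;>
      linarith [hc, h2, h3, h4]
  · rintro ⟨g, hdet, rfl⟩
    have hdA : (!![g 1 1, g 1 0; g 0 1, g 0 0] : Matrix (Fin 2) (Fin 2) ℝ).det = 1 := by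
      rw [Matrix.det_fin_two_of]
      rw [Matrix.det_fin_two] at hdet
      linear_combination hdet
    have hB : (tau 1 g)⁻¹ = !![g 0 0, -(g 1 0); -(g 0 1), g 1 1] := by
      rw [tau_eq g, inv2 _ hdA]
      norm_num
    have hdetq : (g * (tau 1 g)⁻¹).det = 1 := by
      rw [Matrix.det_mul, hdet, one_mul, hB, Matrix.det_fin_two_of]
      rw [Matrix.det_fin_two] at hdet
      linear_combination hdet
    refine ⟨hdetq, ?_⟩
    rw [tau_eq, inv2 _ hdetq, hB]
    ext i j
    fin_cases i <;> fin_cases j <;>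
      simp [Matrix.mul_apply, Fin.sum_univ_two] <;> ring
end

section
/- Let k be a field of characteristic ≠ 2, m ∈ k*, τ = τ_m on SL₂(k). The fixed-point group H is contained in the set Q̃ U (products of an extended-symmetric-space element and an upper unitriangular matrix) if and only if −m is not a square in k*. -/
open Matrix

lemma Ainv {k : Type*} [Field k] {m : k} (hm : m ≠ 0) :
    (!![0,1;m,0] : Matrix (Fin 2) (Fin 2) k)⁻¹ = !![0, m⁻¹; 1, 0] := by
  apply Matrix.inv_eq_right_inv
  ext i j
  fin_cases i <;> fin_cases j <;>
    simp [Matrix.mul_apply, Fin.sum_univ_two] <;> field_simp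

lemma tau_eq_s16 {k : Type*} [Field k] {m : k} (hm : m ≠ 0) (g : Matrix (Fin 2) (Fin 2) k) :
    tau m g = !![g 1 1, g 1 0 * m⁻¹; m * g 0 1, g 0 0] := by
  unfold tau
  rw [Ainv hm]
  nth_rewrite 1 [Matrix.eta_fin_two g]
  ext i j
  fin_cases i <;> fin_cases j <;>
    simp [Matrix.mul_apply, Fin.sum_univ_two] <;> field_simp <;> try ring

lemma inv_of_det_one {k : Type*} [Field k] {q : Matrix (Fin 2) (Fin 2) k} (h : q.det = 1) :
    q⁻¹ = !![q 1 1, -(q 0 1); -(q 1 0), q 0 0] := by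
  rw [Matrix.inv_def, h, Ring.inverse_one, one_smul, Matrix.adjugate_fin_two]

/-- H ⊆ Q̃ U if and only if -m is not a square in k*. -/
theorem stmt16 {k : Type*} [Field k] (hchar : (2 : k) ≠ 0) (m : k) (hm : m ≠ 0) :
    ({g : Matrix (Fin 2) (Fin 2) k | g.det = 1 ∧ tau m g = g} ⊆
        {x : Matrix (Fin 2) (Fin 2) k | ∃ q : Matrix (Fin 2) (Fin 2) k, ∃ u : k,
          (q.det = 1 ∧ tau m q = q⁻¹) ∧ x = q * !![1, u; 0, 1]}) ↔
      ¬ ∃ x : k, x ^ 2 = -m := by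
  constructor
  · rintro hsub ⟨x, hx⟩
    have hx0 : x ≠ 0 := by
      intro h; rw [h] at hx; simp at hx; exact hm hx
    have hb0 : x⁻¹ ≠ 0 := inv_ne_zero hx0
    have hgmem : (!![0, x⁻¹; m*x⁻¹, 0] : Matrix (Fin 2) (Fin 2) k) ∈
        {g : Matrix (Fin 2) (Fin 2) k | g.det = 1 ∧ tau m g = g} := by
      constructor
      · rw [Matrix.det_fin_two]
        simp
        field_simp
        linear_combination -hx
      · rw [tau_eq_s16 hm]
        ext i j
        fin_cases i <;> fin_cases j <;> simp <;> field_simp <;> try ring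
    obtain ⟨q, u, ⟨hdq, htq⟩, heq⟩ := hsub hgmem
    rw [tau_eq_s16 hm, inv_of_det_one hdq] at htq
    have h10 : m * q 0 1 = -(q 1 0) := by
      have := congrFun (congrFun htq 1) 0
      simpa using this
    have e00 : (0 : k) = q 0 0 := by
      have := congrFun (congrFun heq 0) 0
      simpa [Matrix.mul_apply, Fin.sum_univ_two] using this
    have e01 : x⁻¹ = q 0 0 * u + q 0 1 := by
      have := congrFun (congrFun heq 0) 1
      simpa [Matrix.mul_apply, Fin.sum_univ_two] using this
    have e10 : m * x⁻¹ = q 1 0 := by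
      have := congrFun (congrFun heq 1) 0
      simpa [Matrix.mul_apply, Fin.sum_univ_two] using this
    have key : (2 : k) * (m * x⁻¹) = 0 := by
      linear_combination h10 + m * e01 - m * u * e00 + e10
    rcases mul_eq_zero.1 key with h | h
    · exact hchar h
    · rcases mul_eq_zero.1 h with h | h
      · exact hm h
      · exact hb0 h
  · intro hsq g hg
    obtain ⟨hdet, htau⟩ := hg
    rw [tau_eq_s16 hm] at htau
    have e11 : g 1 1 = g 0 0 := by
      have := congrFun (congrFun htau 0) 0
      simpa using this
    have e10 : m * g 0 1 = g 1 0 := by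
      have := congrFun (congrFun htau 1) 0
      simpa using this
    rw [Matrix.det_fin_two] at hdet
    set a := g 0 0 with ha
    set b := g 0 1 with hb
    have hdet' : a * a - m * b * b = 1 := by
      linear_combination hdet - b * e10 - a * e11
    have hane : a ≠ 0 := by
      intro h0
      apply hsq
      have hbne : b ≠ 0 := by
        intro hb0
        rw [h0, hb0] at hdet'
        simp at hdet'
      refine ⟨b⁻¹, ?_⟩
      field_simp
      linear_combination -hdet' + a * h0
    obtain ⟨u, hau⟩ : ∃ u : k, a * u = 2 * b := ⟨2 * b / a, by field_simp⟩
    have hdq : (!![a, -b; m*b, a - m*b*u] : Matrix (Fin 2) (Fin 2) k).det = 1 := by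
      rw [Matrix.det_fin_two]
      simp
      linear_combination hdet' - m * b * hau
    refine ⟨!![a, -b; m*b, a - m*b*u], u, ⟨hdq, ?_⟩, ?_⟩
    · rw [tau_eq_s16 hm, inv_of_det_one hdq]
      ext i j
      fin_cases i <;> fin_cases j <;> simp <;> field_simp <;> try ring
    · ext i j
      fin_cases i <;> fin_cases j <;>
        simp [Matrix.mul_apply, Fin.sum_univ_two] <;>
        first
          | rfl
          | linear_combination hau
          | linear_combination -hau
          | linear_combination e10
          | linear_combination -e10
          | linear_combination e11
          | linear_combination -e11
          | linear_combination e11 + hau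
          | linear_combination e11 - hau
end
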